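/- Let G = (S, C, R) be a reaction network with a set of intermediate species Y ⊆ S and let G* = (S*, C*, R*) be the reduction of G by removal of Y. For a subset Σ ⊆ S, let M(Σ) denote the set of intermediates Y ∈ Y for which there is a directed reaction path Y → Y^(1) → ⋯ → Y^(k) → y' in G with Y^(1),…,Y^(k) ∈ Y and the support of the complex y' intersecting Σ. If Σ* is a siphon of G*, then Σ := Σ* ∪ M(Σ*) is a siphon of G; furthermore, every siphon of G containing Σ* contains M(Σ*). -/

import Mathlib

/-- A reaction network: a finite set of species, a finite set of complexes
(nonnegative vectors supported on the species), and a finite set of reactions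
(a digraph on the complexes with no self-loops), such that every complex takes
part in some reaction and every species is part of some complex. -/
structure RN (ι : Type) where
  species : Finset ι
  complexes : Finset (ι → ℝ)
  reactions : Finset ((ι → ℝ) × (ι → ℝ))
  complexes_nonneg : ∀ y ∈ complexes, ∀ i, 0 ≤ y i
  complexes_supp : ∀ y ∈ complexes, ∀ i, y i ≠ 0 → i ∈ species
  react_mem_fst : ∀ r ∈ reactions, r.1 ∈ complexes
  react_mem_snd : ∀ r ∈ reactions, r.2 ∈ complexes
  no_loops : ∀ r ∈ reactions, r.1 ≠ r.2
  complexes_used : ∀ y ∈ complexes, ∃ r ∈ reactions, r.1 = y ∨ r.2 = y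
  species_used : ∀ i ∈ species, ∃ y ∈ complexes, y i ≠ 0

namespace RN

variable {ι : Type}

/-- A siphon: a nonempty set of species such that every reaction having a
product species in it also has a reactant species in it. -/
def IsSiphon (G : RN ι) (T : Set ι) : Prop :=
  T.Nonempty ∧ T ⊆ ↑G.species ∧
    ∀ r ∈ G.reactions, (∃ i ∈ T, 0 < r.2 i) → ∃ i ∈ T, 0 < r.1 i

/-- A minimal siphon: a siphon not properly containing any other siphon. -/
def MinimalSiphon (G : RN ι) (T : Set ι) : Prop :=
  G.IsSiphon T ∧ ∀ T' : Set ι, G.IsSiphon T' → T' ⊆ T → T' = T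

/-- A nonempty set of species is drainable if some finite sequence of reactions
(with repetitions allowed) strictly decreases every one of its coordinates. -/
def Drainable (G : RN ι) (T : Set ι) : Prop :=
  T.Nonempty ∧ T ⊆ ↑G.species ∧
    ∃ L : List ((ι → ℝ) × (ι → ℝ)), (∀ r ∈ L, r ∈ G.reactions) ∧
      ∀ i ∈ T, (L.map (fun r => r.2 i - r.1 i)).sum < 0

/-- A nonempty set of species is self-replicable if some finite sequence of
reactions (with repetitions allowed) strictly increases every one of its
coordinates. -/
def SelfReplicable (G : RN ι) (T : Set ι) : Prop :=
  T.Nonempty ∧ T ⊆ ↑G.species ∧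
    ∃ L : List ((ι → ℝ) × (ι → ℝ)), (∀ r ∈ L, r ∈ G.reactions) ∧
      ∀ i ∈ T, 0 < (L.map (fun r => r.2 i - r.1 i)).sum

/-- A P-semiflow: a nonzero nonnegative vector supported on the species with
ωᵀN = 0, i.e. ω · (y' - y) = 0 for every reaction y → y'. -/
def IsPSemiflow (G : RN ι) (ω : ι → ℝ) : Prop :=
  (∀ i, 0 ≤ ω i) ∧ (∀ i, ω i ≠ 0 → i ∈ G.species) ∧ ω ≠ 0 ∧
    ∀ r ∈ G.reactions, ∑ i ∈ G.species, ω i * (r.2 i - r.1 i) = 0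

/-- The siphon/P-semiflow property: every siphon contains the support of a
P-semiflow. -/
def SiphonPSemiflowProperty (G : RN ι) : Prop :=
  ∀ T : Set ι, G.IsSiphon T → ∃ ω : ι → ℝ, G.IsPSemiflow ω ∧ {i | 0 < ω i} ⊆ T

/-- Consistency: there is a strictly positive T-semiflow, i.e. strictly
positive reaction weights v with N v = 0. -/
def Consistent (G : RN ι) : Prop :=
  ∃ v : ((ι → ℝ) × (ι → ℝ)) → ℝ, (∀ r ∈ G.reactions, 0 < v r) ∧
    ∀ i : ι, ∑ r ∈ G.reactions, v r * (r.2 i - r.1 i) = 0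

/-- Conservativity: there is a strictly positive conservation law ω ≫ 0 with
ωᵀN = 0. -/
def Conservative (G : RN ι) : Prop :=
  ∃ ω : ι → ℝ, (∀ i ∈ G.species, 0 < ω i) ∧
    ∀ r ∈ G.reactions, ∑ i ∈ G.species, ω i * (r.2 i - r.1 i) = 0

/-- A directed reaction path from `y` to `y'` all of whose non-endpoint
complexes lie in the set `A`. -/
def PathThrough (G : RN ι) (A : Set (ι → ℝ)) (y y' : ι → ℝ) : Prop :=
  ∃ L : List (ι → ℝ), (∀ z ∈ L, z ∈ A) ∧
    List.Chain (fun a b => (a, b) ∈ G.reactions) y (L ++ [y'])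

end RN

variable {ι : Type}

/-- The complex consisting of the single species `j` (with unit coefficient),
for `j` in the given set. -/
def InterCplx [DecidableEq ι] (Y : Finset ι) (z : ι → ℝ) : Prop :=
  ∃ j ∈ Y, z = Pi.single j 1

/-- The complex `z` is supported off the set `Y`. -/
def OffSet (Y : Finset ι) (z : ι → ℝ) : Prop := ∀ j ∈ Y, z j = 0

namespace RN

/-- `Y` is a set of intermediate species of `G`: (I1) every complex is either
supported off `Y` or equals a single species of `Y` with unit coefficient;
(I2) every `Y`-complex is connected to non-intermediate complexes by directed
reaction paths, in both directions, all of whose non-endpoints are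
intermediates. -/
def IsIntermediateSet [DecidableEq ι] (G : RN ι) (Y : Finset ι) : Prop :=
  Y.Nonempty ∧ Y ⊆ G.species ∧
    (∀ y ∈ G.complexes, OffSet Y y ∨ InterCplx Y y) ∧
    (∀ j ∈ Y, ∃ y ∈ G.complexes, ∃ y' ∈ G.complexes, OffSet Y y ∧ OffSet Y y' ∧
      G.PathThrough {z | InterCplx Y z} y (Pi.single j 1) ∧
      G.PathThrough {z | InterCplx Y z} (Pi.single j 1) y')

/-- `G'` is the reduction of `G` by removal of the set of intermediates `Y`:
its reactions are exactly the pairs `y → y'` of distinct non-intermediate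
complexes of `G` joined by a directed reaction path all of whose non-endpoints
are intermediates (in particular all reactions of `G` between non-intermediate
complexes). -/
def IsIntermediateReduction [DecidableEq ι] (G : RN ι) (Y : Finset ι) (G' : RN ι) : Prop :=
  ∀ p : (ι → ℝ) × (ι → ℝ), p ∈ G'.reactions ↔
    (p.1 ∈ G.complexes ∧ p.2 ∈ G.complexes ∧ OffSet Y p.1 ∧ OffSet Y p.2 ∧
      p.1 ≠ p.2 ∧ G.PathThrough {z | InterCplx Y z} p.1 p.2)

end RN

/-- The projection of a complex onto the coordinates outside `E` (the
coordinates in `E` are set to zero). -/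
def projOff [DecidableEq ι] (E : Finset ι) (y : ι → ℝ) : ι → ℝ :=
  fun i => if i ∈ E then 0 else y i

namespace RN

/-- `E` is a set of catalysts of `G`, with `GE` the subnetwork of `G` implied
by `E`: (C1) every reaction either leaves the `E`-coordinates untouched or is
supported entirely in `E`; `GE` consists of the reactions of `G` involving
only species of `E`; and (C2) `GE` has no drainable and no self-replicable
siphons. -/
def IsCatalystSet (G GE : RN ι) (E : Finset ι) : Prop :=
  E.Nonempty ∧ E ⊆ G.species ∧
    (∀ r ∈ G.reactions, (∀ i ∈ E, r.1 i = r.2 i) ∨ (∀ i, i ∉ E → r.1 i = 0 ∧ r.2 i = 0)) ∧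
    (∀ p : (ι → ℝ) × (ι → ℝ), p ∈ GE.reactions ↔
      (p ∈ G.reactions ∧ (∀ i, p.1 i ≠ 0 → i ∈ E) ∧ (∀ i, p.2 i ≠ 0 → i ∈ E))) ∧
    (∀ T : Set ι, GE.IsSiphon T → ¬ GE.Drainable T ∧ ¬ GE.SelfReplicable T)

/-- `G'` is the reduction of `G` by removal of the set of catalysts `E`: its
reactions are the projections off `E` of those reactions of `G` at least one
of whose projected sides is nonzero. -/
def IsCatalystReduction [DecidableEq ι] (G : RN ι) (E : Finset ι) (G' : RN ι) : Prop :=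
  ∀ p : (ι → ℝ) × (ι → ℝ), p ∈ G'.reactions ↔
    ∃ r ∈ G.reactions, p = (projOff E r.1, projOff E r.2) ∧
      (projOff E r.1 ≠ 0 ∨ projOff E r.2 ≠ 0)

/-- A monomolecular network: every complex is either zero or a single species
with unit coefficient. -/
def Monomolecular [DecidableEq ι] (G : RN ι) : Prop :=
  ∀ y ∈ G.complexes, y = 0 ∨ ∃ i ∈ G.species, y = Pi.single i 1

end RN

/-- The set `M(Σ)` of intermediates `Y ∈ 𝒴` from which there is a directed
reaction path `Y → Y⁽¹⁾ → ⋯ → Y⁽ᵏ⁾ → y'` in `G` with all `Y⁽ʲ⁾` intermediates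
and with the support of `y'` intersecting `Σ`. -/
def Mset {ι : Type} [DecidableEq ι] (G : RN ι) (Y : Finset ι) (T : Set ι) : Set ι :=
  {j | j ∈ Y ∧ ∃ y' : ι → ℝ, (∃ i ∈ T, 0 < y' i) ∧
    G.PathThrough {z | InterCplx Y z} (Pi.single j 1) y'}

lemma single_pos_eq {ι : Type} [DecidableEq ι] {j p : ι}
    (h : 0 < (Pi.single j (1:ℝ) : ι → ℝ) p) : p = j := by
  by_contra hne
  rw [Pi.single_eq_of_ne hne] at h
  exact lt_irrefl 0 h

lemma chain_last_edge {ι : Type} (G : RN ι) :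
    ∀ (l : List (ι → ℝ)) (a b : ι → ℝ),
      List.Chain (fun u v => (u, v) ∈ G.reactions) a (l ++ [b]) →
      ∃ c, (c, b) ∈ G.reactions := by
  intro l
  induction l with
  | nil =>
    intro a b h
    rw [List.nil_append, List.Chain, List.isChain_pair] at h
    exact ⟨a, h⟩
  | cons z l ih =>
    intro a b h
    rw [List.cons_append, List.Chain, List.isChain_cons_cons] at h
    exact ih z b h.2

/-- Lemma 6: if `G'` is obtained from `G` by removal of a set of intermediates
`Y` and `Σ*` is a siphon of `G'`, then `Σ* ∪ M(Σ*)` is a siphon of `G`;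
moreover, every siphon of `G` containing `Σ*` also contains `M(Σ*)`. -/
theorem siphon_extension_after_intermediate_removal
    {ι : Type} [DecidableEq ι] (G G' : RN ι) (Y : Finset ι)
    (hY : G.IsIntermediateSet Y) (hred : G.IsIntermediateReduction Y G')
    (T' : Set ι) (hT' : G'.IsSiphon T') :
    G.IsSiphon (T' ∪ Mset G Y T') ∧
    ∀ T : Set ι, G.IsSiphon T → T' ⊆ T → Mset G Y T' ⊆ T := by
  obtain ⟨hYne, hYsub, hI1, hI2⟩ := hY
  obtain ⟨hT'ne, hT'sub, hT'siphon⟩ := hT'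
  -- every element of T' is a G-species and not an intermediate
  have hT'G : ∀ i ∈ T', i ∈ G.species ∧ i ∉ Y := by
    intro i hi
    have hiS : i ∈ G'.species := hT'sub hi
    obtain ⟨y, hy, hyi⟩ := G'.species_used i hiS
    obtain ⟨r, hr, hry⟩ := G'.complexes_used y hy
    have hr' := (hred r).mp hr
    rcases hry with h | h
    · rw [← h] at hyi
      exact ⟨G.complexes_supp _ hr'.1 i hyi, fun hiY => hyi (hr'.2.2.1 i hiY)⟩
    · rw [← h] at hyi
      exact ⟨G.complexes_supp _ hr'.2.1 i hyi, fun hiY => hyi (hr'.2.2.2.1 i hiY)⟩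
  -- Part 2 key: walking a path of intermediates backwards inside a siphon of G
  have key2 : ∀ (T : Set ι), G.IsSiphon T →
      ∀ (L : List (ι → ℝ)), ∀ (j : ι) (y'' : ι → ℝ),
        (∀ z ∈ L, InterCplx Y z) →
        List.Chain (fun u v => (u, v) ∈ G.reactions) (Pi.single j 1) (L ++ [y'']) →
        (∃ i ∈ T, 0 < y'' i) → j ∈ T := by
    intro T hT L
    induction L with
    | nil =>
      intro j y'' _ hchain hi
      rw [List.nil_append, List.Chain, List.isChain_pair] at hchain
      obtain ⟨p, hp, hpos⟩ := hT.2.2 _ hchain hi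
      exact (single_pos_eq hpos) ▸ hp
    | cons z L ih =>
      intro j y'' hzL hchain hi
      rw [List.cons_append, List.Chain, List.isChain_cons_cons] at hchain
      obtain ⟨hedge, hchain'⟩ := hchain
      obtain ⟨m, hmY, hz⟩ := hzL z List.mem_cons_self
      subst hz
      have hmT : m ∈ T := ih m y'' (fun w hw => hzL w (List.mem_cons_of_mem _ hw)) hchain' hi
      obtain ⟨p, hp, hpos⟩ := hT.2.2 _ hedge ⟨m, hmT, by simp⟩
      exact (single_pos_eq hpos) ▸ hp
  constructor
  · refine ⟨hT'ne.mono Set.subset_union_left, ?_, ?_⟩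
    · rintro i (hi | hi)
      · exact (hT'G i hi).1
      · exact hYsub hi.1
    · rintro r hr ⟨i, hiU, hpos⟩
      rcases hI1 r.2 (G.react_mem_snd r hr) with hoff | ⟨k, hkY, hk⟩
      · -- product complex is off Y
        have hiY : i ∉ Y := fun h => by rw [hoff i h] at hpos; exact lt_irrefl 0 hpos
        have hiT' : i ∈ T' := by
          rcases hiU with h | h
          · exact h
          · exact absurd h.1 hiY
        rcases hI1 r.1 (G.react_mem_fst r hr) with hoff1 | ⟨j, hjY, hj⟩
        · -- both endpoints off Y, so r is a reaction of G'
          have hrG' : r ∈ G'.reactions := by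
            refine (hred r).mpr ⟨G.react_mem_fst r hr, G.react_mem_snd r hr, hoff1, hoff,
              G.no_loops r hr, ⟨[], by simp, ?_⟩⟩
            rw [List.nil_append, List.Chain, List.isChain_pair]
            exact hr
          obtain ⟨p, hp, hppos⟩ := hT'siphon r hrG' ⟨i, hiT', hpos⟩
          exact ⟨p, Or.inl hp, hppos⟩
        · -- reactant is an intermediate complex
          have hjM : j ∈ Mset G Y T' := by
            refine ⟨hjY, r.2, ⟨i, hiT', hpos⟩, [], by simp, ?_⟩
            rw [List.nil_append, List.Chain, List.isChain_pair, ← hj]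
            exact hr
          exact ⟨j, Or.inr hjM, by rw [hj]; simp⟩
      · -- product complex is an intermediate Pi.single k 1
        have hik : i = k := single_pos_eq (hk ▸ hpos)
        subst hik
        have hiM : i ∈ Mset G Y T' := by
          rcases hiU with h | h
          · exact absurd hkY (hT'G i h).2
          · exact h
        obtain ⟨-, y'', hy''T, L, hL, hchain⟩ := hiM
        rcases hI1 r.1 (G.react_mem_fst r hr) with hoff1 | ⟨j, hjY, hj⟩
        · -- reactant off Y: either y = y'' (direct) or (y, y'') is a G'-reaction
          obtain ⟨i0, hi0T', hi0pos⟩ := hy''T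
          have hedge : (r.1, Pi.single i 1) ∈ G.reactions := by rw [← hk]; exact hr
          have hchain2 : List.Chain (fun u v => (u, v) ∈ G.reactions) r.1
              ((Pi.single i 1 :: L) ++ [y'']) := by
            rw [List.cons_append, List.Chain, List.isChain_cons_cons]
            exact ⟨hedge, hchain⟩
          obtain ⟨c, hc⟩ := chain_last_edge G (Pi.single i 1 :: L) r.1 y'' hchain2
          have hy''C : y'' ∈ G.complexes := G.react_mem_snd _ hc
          have hy''off : OffSet Y y'' := by
            rcases hI1 y'' hy''C with h | ⟨m, hmY, hm⟩
            · exact h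
            · exact absurd ((single_pos_eq (hm ▸ hi0pos)) ▸ hmY) (hT'G i0 hi0T').2
          by_cases heq : r.1 = y''
          · exact ⟨i0, Or.inl hi0T', heq ▸ hi0pos⟩
          · have hmem : (r.1, y'') ∈ G'.reactions := by
              refine (hred (r.1, y'')).mpr ⟨G.react_mem_fst r hr, hy''C, hoff1, hy''off,
                heq, ⟨Pi.single i 1 :: L, ?_, hchain2⟩⟩
              intro z hz
              rcases List.mem_cons.mp hz with h | h
              · exact ⟨i, hkY, h⟩
              · exact hL z h
            obtain ⟨p, hp, hppos⟩ := hT'siphon _ hmem ⟨i0, hi0T', hi0pos⟩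
            exact ⟨p, Or.inl hp, hppos⟩
        · -- reactant is also an intermediate: extend the path
          have hjM : j ∈ Mset G Y T' := by
            refine ⟨hjY, y'', hy''T, Pi.single i 1 :: L, ?_, ?_⟩
            · intro z hz
              rcases List.mem_cons.mp hz with h | h
              · exact ⟨i, hkY, h⟩
              · exact hL z h
            · rw [List.cons_append, List.Chain, List.isChain_cons_cons]
              refine ⟨?_, hchain⟩
              rw [← hj, ← hk]
              exact hr
          exact ⟨j, Or.inr hjM, by rw [hj]; simp⟩
  · rintro T hT hT'T j ⟨hjY, y'', ⟨i, hiT', hipos⟩, L, hL, hchain⟩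
    exact key2 T hT L j y'' (fun z hz => hL z hz) hchain ⟨i, hT'T hiT', hipos⟩
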